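/- arXiv:1809.02483 — 2 statements merged into one kernel-verified Lean document; each statement's English description precedes it below -/
import Mathlib

section
/- Let K₁ and K₂ be complete discrete valued fields of mixed characteristic (0, p) with perfect residue fields, with Teichmüller representative sets S(K₁) and S(K₂), and let f : H_n(K₁) → H_m(K₂) be a homomorphism of valued hyperfields. Then f maps H_n(S(K₁)) = {[a]_n : a ∈ S(K₁)} into H_m(S(K₂)) = {[a]_m : a ∈ S(K₂)}, and the restriction of f to H_n(S(K₁)) is injective. -/
open Multiplicative WithZero Filter

noncomputable section

/-- The multiplicative value group `ℚₘ₀` used for normalized valuations: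
`expQ q` corresponds to the additive value `q`. -/
abbrev QM0 : Type := WithZero (Multiplicative ℚ)

/-- `expQ q` is the element of `ℚₘ₀` corresponding to the additive value `q`
(so that `v x = expQ q` means `ν(x) = q` additively). -/
def expQ (q : ℚ) : QM0 := ((Multiplicative.ofAdd (-q) : Multiplicative ℚ) : QM0)

section Hyper

variable {K : Type*} [Field K] {Γ₀ : Type*} [LinearOrderedCommGroupWithZero Γ₀]

/-- `hrel v γ a b` says that `b` belongs to the coset `a·(1+𝔪^γ)`,
where `𝔪^γ = {x : ν(x) > γ}` (multiplicatively: `v x < γ`). -/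
def hrel (v : Valuation K Γ₀) (γ : Γ₀) (a b : K) : Prop :=
  ∃ u : K, v (u - 1) < γ ∧ b = a * u

/-- The coset `a·(1+𝔪^γ)` as a subset of `K`. -/
def coset (v : Valuation K Γ₀) (γ : Γ₀) (a : K) : Set K := {b | hrel v γ a b}

/-- `hsumMem v γ a b c` says `[c] ∈ [a] + [b]` in the valued hyperfield `H_γ(K)`. -/
def hsumMem (v : Valuation K Γ₀) (γ : Γ₀) (a b c : K) : Prop :=
  ∃ x y : K, hrel v γ a x ∧ hrel v γ b y ∧ hrel v γ (x + y) c

/-- The valued hyperfield `H_γ(K) = K/(1+𝔪^γ)`. -/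
def Hyp (v : Valuation K Γ₀) (γ : Γ₀) : Type _ := Quot (hrel v γ)

/-- The class `[a]_γ ∈ H_γ(K)`. -/
def hmk (v : Valuation K Γ₀) (γ : Γ₀) (a : K) : Hyp v γ := Quot.mk _ a

end Hyper

section HypHom

variable {K₁ K₂ : Type*} [Field K₁] [Field K₂]
variable {Γ₁ Γ₂ : Type*} [LinearOrderedCommGroupWithZero Γ₁] [LinearOrderedCommGroupWithZero Γ₂]

/-- A homomorphism of valued hyperfields `H_γ(K₁) → H_δ(K₂)`:
`f([0]) = [0]`, `f([1]) = [1]`, `f` is multiplicative, `f(α + β) ⊆ f(α) + f(β)`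
and `ν(α) ≤ ν(β) ↔ ν(f α) ≤ ν(f β)` (stated here multiplicatively). -/
structure HypHom (v₁ : Valuation K₁ Γ₁) (γ : Γ₁) (v₂ : Valuation K₂ Γ₂) (δ : Γ₂) where
  toFun : Hyp v₁ γ → Hyp v₂ δ
  map_zero' : toFun (hmk v₁ γ 0) = hmk v₂ δ 0
  map_one' : toFun (hmk v₁ γ 1) = hmk v₂ δ 1
  map_mul' : ∀ (a b : K₁) (a' b' : K₂), toFun (hmk v₁ γ a) = hmk v₂ δ a' →
    toFun (hmk v₁ γ b) = hmk v₂ δ b' → toFun (hmk v₁ γ (a * b)) = hmk v₂ δ (a' * b')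
  map_hsum' : ∀ (a b c : K₁) (a' b' c' : K₂), toFun (hmk v₁ γ a) = hmk v₂ δ a' →
    toFun (hmk v₁ γ b) = hmk v₂ δ b' → toFun (hmk v₁ γ c) = hmk v₂ δ c' →
    hsumMem v₁ γ a b c → hsumMem v₂ δ a' b' c'
  val_le_iff' : ∀ (a b : K₁) (a' b' : K₂), toFun (hmk v₁ γ a) = hmk v₂ δ a' →
    toFun (hmk v₁ γ b) = hmk v₂ δ b' → (v₁ a ≤ v₁ b ↔ v₂ a' ≤ v₂ b')

/-- A homomorphism of valued hyperfields is *over `p`* if `f([p]) = [p]`. -/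
def HypHom.OverP {v₁ : Valuation K₁ Γ₁} {γ : Γ₁} {v₂ : Valuation K₂ Γ₂} {δ : Γ₂}
    (p : ℕ) (f : HypHom v₁ γ v₂ δ) : Prop :=
  f.toFun (hmk v₁ γ (p : K₁)) = hmk v₂ δ (p : K₂)

end HypHom

section CDVF

variable (K : Type*) [Field K] [Valued K QM0]

/-- `K` is a complete discrete valued field of mixed characteristic `(0,p)` with
perfect residue field and ramification index `e`, with the valuation normalized so
that `ν(p) = 1` and `ν(K^×) = (1/e)ℤ`.  Perfectness of the residue field is expressed
as surjectivity of the Frobenius on residues. -/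
structure IsCompleteDVF (p e : ℕ) : Prop where
  prime : p.Prime
  charZero : CharZero K
  complete : CompleteSpace K
  epos : 0 < e
  v_p : Valued.v (p : K) = expQ 1
  discrete : ∀ x : K, x ≠ 0 → ∃ k : ℤ, Valued.v x = expQ ((k : ℚ) / e)
  exists_unif : ∃ π : K, Valued.v π = expQ (1 / e)
  perfectResidue : ∀ x : K, Valued.v x ≤ 1 → ∃ y : K, Valued.v y ≤ 1 ∧ Valued.v (x - y ^ p) < 1

/-- The cut-off value for the `n`-th valued hyperfield `H_n(K) = K/(1+𝔪^n)`:
`𝔪^n = {x : ν(x) > (n-1)/e}` when the ramification index is `e` and `ν(p) = 1`. -/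
def hnγ (e n : ℕ) : QM0 := expQ (((n : ℚ) - 1) / e)

/-- The set of Teichmüller representatives: elements of the valuation ring which are
`p^s`-th powers in the valuation ring for every `s`. -/
def Teich (p : ℕ) : Set K :=
  {a | Valued.v a ≤ 1 ∧ ∀ s : ℕ, ∃ b : K, Valued.v b ≤ 1 ∧ b ^ p ^ s = a}

/-- The Witt subring of `K`: the set of (convergent) sums `Σ s_k p^k` with all
`s_k` Teichmüller representatives. -/
def WittPart (p : ℕ) : Set K :=
  {x | ∃ s : ℕ → K, (∀ k, s k ∈ Teich K p) ∧
    Tendsto (fun n => ∑ k ∈ Finset.range n, s k * (p : K) ^ k) atTop (nhds x)}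

end CDVF


/-! ### Auxiliary development -/

section ExpQLemmas

lemma expQ_ne_zero (q : ℚ) : expQ q ≠ 0 := WithZero.coe_ne_zero

lemma expQ_zero : expQ 0 = 1 := by simp [expQ]

lemma expQ_add (a b : ℚ) : expQ (a + b) = expQ a * expQ b := by
  rw [expQ, expQ, expQ, ← WithZero.coe_mul, ← ofAdd_add]; ring_nf

lemma expQ_le_expQ {a b : ℚ} : expQ a ≤ expQ b ↔ b ≤ a := by
  rw [expQ, expQ, WithZero.coe_le_coe, Multiplicative.ofAdd_le]; exact neg_le_neg_iff

lemma expQ_lt_expQ {a b : ℚ} : expQ a < expQ b ↔ b < a := by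
  rw [expQ, expQ, WithZero.coe_lt_coe, Multiplicative.ofAdd_lt]; exact neg_lt_neg_iff

lemma expQ_inj {a b : ℚ} (h : expQ a = expQ b) : a = b :=
  le_antisymm (expQ_le_expQ.mp h.ge) (expQ_le_expQ.mp h.le)

lemma expQ_pow (a : ℚ) (k : ℕ) : expQ a ^ k = expQ (k * a) := by
  induction k with
  | zero => simp [expQ_zero]
  | succ k ih => rw [pow_succ, ih, ← expQ_add]; push_cast; ring_nf

lemma exists_expQ {γ : QM0} (h : γ ≠ 0) : ∃ q : ℚ, γ = expQ q := by
  obtain ⟨a, rfl⟩ := WithZero.ne_zero_iff_exists.mp h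
  exact ⟨-Multiplicative.toAdd a, by simp [expQ]⟩

lemma exists_expQ_pow_lt {r : ℚ} (hr : 0 < r) (q : ℚ) {γ : QM0} (hγ : γ ≠ 0) :
    ∃ s : ℕ, expQ q * expQ r ^ s < γ := by
  obtain ⟨t, rfl⟩ := exists_expQ hγ
  obtain ⟨s, hs⟩ := exists_nat_gt ((t - q) / r)
  refine ⟨s, ?_⟩
  rw [expQ_pow, ← expQ_add, expQ_lt_expQ]
  have h2 : t - q < s * r := by
    have := (div_lt_iff₀ hr).mp hs
    linarith
  linarith

end ExpQLemmas

section ValLemmas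

variable {K : Type*} [Field K] {Γ₀ : Type*} [LinearOrderedCommGroupWithZero Γ₀]
variable (v : Valuation K Γ₀)

lemma v_nat_le_one (n : ℕ) : v (n : K) ≤ 1 := by
  induction n with
  | zero => simp
  | succ n ih =>
    push_cast
    calc v ((n : K) + 1) ≤ max (v (n : K)) (v 1) := v.map_add _ _
    _ ≤ 1 := by rw [v.map_one]; exact max_le ih le_rfl

lemma v_unit_of_close {γ : Γ₀} (hγ : γ ≤ 1) {u : K} (h : v (u - 1) < γ) : v u = 1 := by
  have h2 : v ((u - 1) + 1) = v 1 :=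
    v.map_add_eq_of_lt_right (by rw [v.map_one]; exact lt_of_lt_of_le h hγ)
  rwa [sub_add_cancel, v.map_one] at h2

/-- `v (x^k - y^k) ≤ v (x - y)` for elements of the valuation ring. -/
lemma v_pow_sub_pow_le {x y : K} (hx : v x ≤ 1) (hy : v y ≤ 1) (k : ℕ) :
    v (x ^ k - y ^ k) ≤ v (x - y) := by
  induction k with
  | zero => simp
  | succ k ih =>
    have hid : x ^ (k+1) - y ^ (k+1) = x ^ k * (x - y) + (x ^ k - y ^ k) * y := by ring
    rw [hid]
    refine le_trans (v.map_add _ _) (max_le ?_ ?_)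
    · rw [v.map_mul]
      calc v (x ^ k) * v (x - y) ≤ 1 * v (x - y) :=
            mul_le_mul_left (by rw [v.map_pow]; exact pow_le_one₀ zero_le' hx) _
      _ = v (x - y) := one_mul _
    · rw [v.map_mul]
      calc v (x ^ k - y ^ k) * v y ≤ v (x - y) * 1 := mul_le_mul' ih hy
      _ = v (x - y) := mul_one _

lemma v_sum_expand {p : ℕ} (x y : K) :
    x ^ p - y ^ p = ∑ k ∈ Finset.range p,
      (x - y) ^ (k+1) * y ^ (p - (k+1)) * (p.choose (k+1) : K) := by
  have hxe : x = (x - y) + y := by ring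
  have hsum : x ^ p = ∑ k ∈ Finset.range (p + 1),
      (x - y) ^ k * y ^ (p - k) * (p.choose k : K) := by
    conv_lhs => rw [hxe, add_pow]
  rw [hsum, Finset.sum_range_succ']
  simp

lemma v_frob_step {p : ℕ} (hp : p.Prime) {x y : K} (hy : v y ≤ 1)
    {ρ δ : Γ₀} (hvp : v (p : K) ≤ δ) (hρ1 : ρ ≤ 1) (hρδ : ρ ^ (p - 1) ≤ δ)
    (hd : v (x - y) ≤ ρ) :
    v (x ^ p - y ^ p) ≤ v (x - y) * δ := by
  have hdle : v (x - y) ≤ 1 := le_trans hd hρ1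
  rw [v_sum_expand x y]
  apply v.map_sum_le
  intro k hk
  rw [Finset.mem_range] at hk
  rw [v.map_mul, v.map_mul, v.map_pow, v.map_pow]
  rcases eq_or_lt_of_le (Nat.succ_le_of_lt hk) with hkp | hkp
  · rw [show k + 1 = p from hkp, Nat.sub_self, pow_zero, Nat.choose_self]
    push_cast
    rw [v.map_one]
    have h1 : v (x - y) ^ p = v (x - y) * v (x - y) ^ (p - 1) := by
      conv_lhs => rw [← Nat.succ_pred_eq_of_pos hp.pos]
      rw [pow_succ', Nat.pred_eq_sub_one]
    rw [h1, mul_one, mul_one]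
    refine mul_le_mul' le_rfl (le_trans ?_ hρδ)
    exact pow_le_pow_left' hd _
  · obtain ⟨t, ht⟩ := hp.dvd_choose_self (Nat.succ_ne_zero k) hkp
    rw [ht]
    push_cast
    rw [v.map_mul]
    have h1 : v (x - y) ^ (k + 1) ≤ v (x - y) := by
      rw [pow_succ']
      calc v (x - y) * v (x - y) ^ k ≤ v (x - y) * 1 :=
        mul_le_mul' le_rfl (pow_le_one₀ zero_le' hdle)
      _ = v (x - y) := mul_one _
    have h2 : v y ^ (p - (k+1)) ≤ 1 := pow_le_one₀ zero_le' hy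
    have h3 : v (p : K) * v (t : K) ≤ δ :=
      le_trans (mul_le_mul' hvp (v_nat_le_one v t)) (by rw [mul_one])
    calc v (x - y) ^ (k+1) * v y ^ (p - (k+1)) * (v (p:K) * v (t:K))
        ≤ v (x - y) * 1 * δ := mul_le_mul' (mul_le_mul' h1 h2) h3
    _ = v (x - y) * δ := by rw [mul_one]

lemma v_frob_rev {p : ℕ} (hp : p.Prime) {x y : K} (hx : v x ≤ 1) (hy : v y ≤ 1)
    (hvp : v (p : K) < 1) (h : v (x ^ p - y ^ p) < 1) : v (x - y) < 1 := by
  by_contra hc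
  push_neg at hc
  have hdle : v (x - y) ≤ 1 := le_trans (v.map_sub x y) (max_le hx hy)
  have hde : v (x - y) = 1 := le_antisymm hdle hc
  have hpe : p = (p - 1) + 1 := (Nat.succ_pred_eq_of_pos hp.pos).symm
  have hsum2 : x ^ p - y ^ p =
      (∑ k ∈ Finset.range (p-1), (x - y) ^ (k+1) * y ^ (p - (k+1)) * (p.choose (k+1) : K))
        + (x - y) ^ p := by
    rw [v_sum_expand x y]
    conv_lhs => rw [hpe, Finset.sum_range_succ]
    rw [← hpe, Nat.sub_self, pow_zero, Nat.choose_self]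
    push_cast
    rw [mul_one, mul_one]
  have hE : v (∑ k ∈ Finset.range (p-1),
      (x - y) ^ (k+1) * y ^ (p - (k+1)) * (p.choose (k+1) : K)) ≤ v (p : K) := by
    apply v.map_sum_le
    intro k hk
    rw [Finset.mem_range] at hk
    have hklt : k + 1 < p := by omega
    obtain ⟨t, ht⟩ := hp.dvd_choose_self (Nat.succ_ne_zero k) hklt
    rw [v.map_mul, v.map_mul, ht]
    push_cast
    rw [v.map_mul, v.map_pow, v.map_pow]
    calc v (x - y) ^ (k+1) * v y ^ (p - (k+1)) * (v (p:K) * v (t:K))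
        ≤ 1 * 1 * (v (p:K) * 1) :=
          mul_le_mul' (mul_le_mul' (pow_le_one₀ zero_le' hdle) (pow_le_one₀ zero_le' hy))
            (mul_le_mul' le_rfl (v_nat_le_one v t))
    _ = v (p : K) := by rw [one_mul, mul_one, one_mul]
  have hdp : v ((x - y) ^ p) = 1 := by rw [v.map_pow, hde, one_pow]
  have hfin : v (x ^ p - y ^ p) = 1 := by
    rw [hsum2, v.map_add_eq_of_lt_right (by rw [hdp]; exact lt_of_le_of_lt hE hvp), hdp]
  rw [hfin] at h
  exact lt_irrefl _ h

lemma v_frob_iter {p : ℕ} (hp : p.Prime) {x y : K} (hx : v x ≤ 1) (hy : v y ≤ 1)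
    {ρ δ : Γ₀} (hvp : v (p : K) ≤ δ) (hρ1 : ρ ≤ 1) (hδ1 : δ ≤ 1) (hρδ : ρ ^ (p - 1) ≤ δ)
    (hd : v (x - y) ≤ ρ) (s : ℕ) :
    v (x ^ p ^ s - y ^ p ^ s) ≤ v (x - y) * δ ^ s := by
  induction s with
  | zero => simp
  | succ s ih =>
    have hY : v (y ^ p ^ s) ≤ 1 := by rw [v.map_pow]; exact pow_le_one₀ zero_le' hy
    have hsub : v (x ^ p ^ s - y ^ p ^ s) ≤ ρ := by
      refine le_trans ih ?_
      calc v (x - y) * δ ^ s ≤ ρ * 1 := mul_le_mul' hd (pow_le_one₀ zero_le' hδ1)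
      _ = ρ := mul_one _
    have hstep := v_frob_step v hp hY hvp hρ1 hρδ hsub
    rw [pow_succ, pow_mul, pow_mul]
    calc v ((x ^ p ^ s) ^ p - (y ^ p ^ s) ^ p) ≤ v (x ^ p ^ s - y ^ p ^ s) * δ := hstep
    _ ≤ (v (x - y) * δ ^ s) * δ := mul_le_mul' ih le_rfl
    _ = v (x - y) * δ ^ (s + 1) := by rw [mul_assoc, ← pow_succ]

lemma v_frob_rev_iter {p : ℕ} (hp : p.Prime) {x y : K} (hx : v x ≤ 1) (hy : v y ≤ 1)
    (hvp : v (p : K) < 1) (s : ℕ) (h : v (x ^ p ^ s - y ^ p ^ s) < 1) : v (x - y) < 1 := by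
  induction s with
  | zero => simpa using h
  | succ s ih =>
    apply ih
    have hX : v (x ^ p ^ s) ≤ 1 := by rw [v.map_pow]; exact pow_le_one₀ zero_le' hx
    have hY : v (y ^ p ^ s) ≤ 1 := by rw [v.map_pow]; exact pow_le_one₀ zero_le' hy
    apply v_frob_rev v hp hX hY hvp
    rwa [pow_succ, pow_mul, pow_mul] at h

variable {γ : Γ₀}

lemma hrel_refl (hγ : γ ≠ 0) (a : K) : hrel v γ a a :=
  ⟨1, by rw [sub_self, v.map_zero]; exact zero_lt_iff.mpr hγ, (mul_one a).symm⟩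

lemma hrel_symm (hγ1 : γ ≤ 1) {a b : K} : hrel v γ a b → hrel v γ b a := by
  rintro ⟨u, hu, rfl⟩
  have hv : v u = 1 := v_unit_of_close v hγ1 hu
  have hu0 : u ≠ 0 := v.ne_zero_iff.mp (by rw [hv]; exact one_ne_zero)
  refine ⟨u⁻¹, ?_, by field_simp⟩
  have he : u⁻¹ - 1 = u⁻¹ * (1 - u) := by field_simp
  rw [he, v.map_mul, map_inv₀, hv, inv_one, one_mul, v.map_sub_swap]
  exact hu

lemma hrel_trans (hγ1 : γ ≤ 1) {a b c : K} : hrel v γ a b → hrel v γ b c → hrel v γ a c := by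
  rintro ⟨u1, h1, rfl⟩ ⟨u2, h2, rfl⟩
  refine ⟨u1 * u2, ?_, by ring⟩
  have hv1 : v u1 = 1 := v_unit_of_close v hγ1 h1
  have he : u1 * u2 - 1 = u1 * (u2 - 1) + (u1 - 1) := by ring
  rw [he]
  refine lt_of_le_of_lt (v.map_add _ _) (max_lt ?_ h1)
  rw [v.map_mul, hv1, one_mul]
  exact h2

lemma hrel_equiv (hγ : γ ≠ 0) (hγ1 : γ ≤ 1) : Equivalence (hrel v γ) :=
  ⟨hrel_refl v hγ, hrel_symm v hγ1, hrel_trans v hγ1⟩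

lemma hmk_eq_iff (hγ : γ ≠ 0) (hγ1 : γ ≤ 1) {a b : K} :
    hmk v γ a = hmk v γ b ↔ hrel v γ a b := by
  rw [hmk, hmk]; exact Quot.eq.trans (hrel_equiv v hγ hγ1).eqvGen_iff

lemma v_eq_of_hrel (hγ1 : γ ≤ 1) {a b : K} (h : hrel v γ a b) : v b = v a := by
  obtain ⟨u, hu, rfl⟩ := h
  rw [v.map_mul, v_unit_of_close v hγ1 hu, mul_one]

lemma sub_lt_of_hrel {a b : K} (ha : v a ≠ 0) (h : hrel v γ a b) : v (b - a) < v a * γ := by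
  obtain ⟨u, hu, rfl⟩ := h
  have he : a * u - a = a * (u - 1) := by ring
  rw [he, v.map_mul]
  exact mul_lt_mul_of_pos_left hu (zero_lt_iff.mpr ha)

lemma hrel_of_sub {a b : K} (ha : v a ≠ 0) (h : v (b - a) < v a * γ) : hrel v γ a b := by
  have ha0 : a ≠ 0 := v.ne_zero_iff.mp ha
  refine ⟨b / a, ?_, by field_simp⟩
  have he : b / a - 1 = (b - a) * a⁻¹ := by field_simp
  rw [he, v.map_mul, map_inv₀]
  have h2 := mul_lt_mul_of_pos_left h (zero_lt_iff.mpr (inv_ne_zero ha))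
  calc v (b - a) * (v a)⁻¹ = (v a)⁻¹ * v (b - a) := mul_comm _ _
  _ < (v a)⁻¹ * (v a * γ) := h2
  _ = γ := by rw [← mul_assoc, inv_mul_cancel₀ ha, one_mul]

lemma Hyp.exists_rep' {v : Valuation K Γ₀} {γ : Γ₀} (q : Hyp v γ) : ∃ a : K, hmk v γ a = q :=
  Quot.exists_rep q

end ValLemmas

section HypHomLemmas

variable {K₁ K₂ : Type*} [Field K₁] [Field K₂]
variable {Γ₁ Γ₂ : Type*} [LinearOrderedCommGroupWithZero Γ₁] [LinearOrderedCommGroupWithZero Γ₂]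
variable {v₁ : Valuation K₁ Γ₁} {γ : Γ₁} {v₂ : Valuation K₂ Γ₂} {δ : Γ₂}

lemma HypHom.map_pow (f : HypHom v₁ γ v₂ δ) {x : K₁} {x' : K₂}
    (hx : f.toFun (hmk v₁ γ x) = hmk v₂ δ x') (k : ℕ) :
    f.toFun (hmk v₁ γ (x ^ k)) = hmk v₂ δ (x' ^ k) := by
  induction k with
  | zero => rw [pow_zero, pow_zero]; exact f.map_one'
  | succ k ih => rw [pow_succ, pow_succ]; exact f.map_mul' _ _ _ _ ih hx

end HypHomLemmas


section DVFLemmas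

variable {K : Type*} [Field K] [Valued K QM0]

lemma hnγ_ne_zero (e n : ℕ) : hnγ e n ≠ 0 := expQ_ne_zero _

lemma hnγ_le_one {e n : ℕ} (he : 0 < e) (hn : 1 ≤ n) : hnγ e n ≤ 1 := by
  rw [hnγ, ← expQ_zero, expQ_le_expQ]
  have he' : (0:ℚ) < e := by exact_mod_cast he
  have hn' : (1:ℚ) ≤ n := by exact_mod_cast hn
  exact div_nonneg (by linarith) he'.le

lemma lt_one_le_unif {p e : ℕ} (h : IsCompleteDVF K p e) {x : K} (hx : Valued.v x < 1) :
    Valued.v x ≤ expQ (1 / e) := by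
  rcases eq_or_ne x 0 with rfl | hx0
  · simp
  obtain ⟨k, hk⟩ := h.discrete x hx0
  rw [hk] at hx ⊢
  rw [← expQ_zero, expQ_lt_expQ] at hx
  rw [expQ_le_expQ]
  have he : (0:ℚ) < e := by exact_mod_cast h.epos
  have hk0 : (0:ℚ) < (k:ℚ) := by
    rcases div_pos_iff.mp hx with ⟨h1, _⟩ | ⟨_, h2⟩
    · exact h1
    · exact absurd he (not_lt.mpr h2.le)
  have hk1 : (1:ℚ) ≤ (k:ℚ) := by exact_mod_cast (by exact_mod_cast hk0 : (0:ℤ) < k)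
  gcongr

lemma teich_val {p e : ℕ} (h : IsCompleteDVF K p e) {a : K} (ha : a ∈ Teich K p)
    (h0 : a ≠ 0) : Valued.v a = 1 := by
  obtain ⟨ha1, hpow⟩ := ha
  obtain ⟨k, hk⟩ := h.discrete a h0
  have he : (0:ℚ) < e := by exact_mod_cast h.epos
  -- k is nonneg
  have hk00 : (0:ℚ) ≤ (k:ℚ)/e := by
    rw [hk, ← expQ_zero, expQ_le_expQ] at ha1
    exact ha1
  have hknn : (0:ℚ) ≤ (k:ℚ) := by
    by_contra hneg
    push_neg at hneg
    have : (k:ℚ)/e < 0 := div_neg_of_neg_of_pos hneg he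
    linarith
  rcases eq_or_lt_of_le hknn with hk0 | hkpos
  · rw [hk, show (k:ℚ) = 0 from hk0.symm]
    norm_num [expQ_zero]
  · exfalso
    -- for every s, p^s ≤ k
    have hbig : ∀ s : ℕ, ((p:ℚ))^s ≤ (k:ℚ) := by
      intro s
      obtain ⟨b, hb1, hb2⟩ := hpow s
      have hb0 : b ≠ 0 := by
        rintro rfl
        rw [zero_pow (pow_ne_zero s h.prime.ne_zero)] at hb2
        exact h0 hb2.symm
      obtain ⟨j, hj⟩ := h.discrete b hb0
      have hjnn : (0:ℚ) ≤ (j:ℚ) := by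
        rw [hj, ← expQ_zero, expQ_le_expQ] at hb1
        by_contra hneg
        push_neg at hneg
        have : (j:ℚ)/e < 0 := div_neg_of_neg_of_pos hneg he
        linarith
      have heq : expQ ((k:ℚ)/e) = expQ ((p^s : ℕ) * ((j:ℚ)/e)) := by
        rw [← hk, ← hb2, Valuation.map_pow, hj, expQ_pow]
      have heq2 : (k:ℚ) = (p:ℚ)^s * (j:ℚ) := by
        have h3 := expQ_inj heq
        push_cast at h3
        field_simp at h3
        push_cast
        linarith
      have hj1 : (1:ℚ) ≤ (j:ℚ) := by
        by_contra hlt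
        push_neg at hlt
        have hj0 : (j:ℚ) = 0 := by
          have hj2 : j < 1 := by exact_mod_cast hlt
          have hj3 : (0:ℤ) ≤ j := by exact_mod_cast hjnn
          have : j = 0 := by omega
          exact_mod_cast congrArg (fun x : ℤ => (x:ℚ)) this
        rw [hj0, mul_zero] at heq2
        rw [heq2] at hkpos
        exact lt_irrefl _ hkpos
      calc ((p:ℚ))^s = (p:ℚ)^s * 1 := (mul_one _).symm
      _ ≤ (p:ℚ)^s * (j:ℚ) := by
          have hpsnn : (0:ℚ) ≤ (p:ℚ)^s := by positivity
          exact mul_le_mul_of_nonneg_left hj1 hpsnn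
      _ = (k:ℚ) := heq2.symm
    obtain ⟨N, hN⟩ := pow_unbounded_of_one_lt (k:ℚ)
      (by exact_mod_cast h.prime.one_lt : (1:ℚ) < (p:ℚ))
    exact absurd (hbig N) (not_le.mpr hN)

lemma vp_lt_one {p e : ℕ} (h : IsCompleteDVF K p e) : Valued.v (p : K) < 1 := by
  rw [h.v_p, ← expQ_zero, expQ_lt_expQ]
  norm_num

/-- Existence of the limit of `c s ^ (p ^ s)` for a coherent sequence. -/
lemma exists_lim {p e : ℕ} (h : IsCompleteDVF K p e) (c : ℕ → K)
    (hc1 : ∀ s, Valued.v (c s) ≤ 1)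
    (hcoh : ∀ s, Valued.v (c (s+1) ^ p - c s) ≤ expQ (1 / e)) :
    ∃ L : K, Valued.v L ≤ 1 ∧
      ∀ γ : QM0, γ ≠ 0 → ∃ N, ∀ s ≥ N, Valued.v (c s ^ p ^ s - L) < γ := by
  haveI := h.complete
  set v : Valuation K QM0 := Valued.v with hv
  have he : (0:ℚ) < e := by exact_mod_cast h.epos
  have hp2 : (2:ℚ) ≤ (p:ℚ) := by exact_mod_cast h.prime.two_le
  set r : ℚ := min 1 (((p:ℚ) - 1)/e) with hr
  have hrpos : 0 < r := by
    rw [hr]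
    refine lt_min one_pos ?_
    have : (0:ℚ) < (p:ℚ) - 1 := by linarith
    positivity
  set ρ : QM0 := expQ (1/(e:ℚ)) with hρdef
  set δ : QM0 := expQ r with hδdef
  have hρ1 : ρ ≤ 1 := by rw [hρdef, ← expQ_zero, expQ_le_expQ]; positivity
  have hδ1 : δ ≤ 1 := by rw [hδdef, ← expQ_zero, expQ_le_expQ]; exact hrpos.le
  have hvp : v (p : K) ≤ δ := by
    rw [hv, h.v_p, hδdef, expQ_le_expQ, hr]
    exact min_le_left _ _
  have hρδ : ρ ^ (p - 1) ≤ δ := by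
    rw [hρdef, hδdef, expQ_pow, expQ_le_expQ, hr]
    have hc : ((p - 1 : ℕ):ℚ) = (p:ℚ) - 1 := by
      have := h.prime.one_le
      push_cast [Nat.cast_sub this]
      ring
    rw [hc]
    calc min 1 (((p:ℚ) - 1)/e) ≤ ((p:ℚ) - 1)/e := min_le_right _ _
    _ = ((p:ℚ) - 1) * (1/e) := by ring
  set x : ℕ → K := fun s => c s ^ p ^ s with hx
  have hx1 : ∀ s, v (x s) ≤ 1 := by
    intro s
    rw [hx]
    simp only []
    rw [v.map_pow]
    exact pow_le_one₀ zero_le' (hc1 s)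
  have hstep : ∀ s, v (x (s+1) - x s) ≤ ρ * δ ^ s := by
    intro s
    have h1 : x (s+1) = (c (s+1) ^ p) ^ p ^ s := by
      rw [hx]
      simp only []
      rw [← pow_mul, ← pow_succ']
    have hXle : v (c (s+1) ^ p) ≤ 1 := by
      rw [v.map_pow]; exact pow_le_one₀ zero_le' (hc1 (s+1))
    have h2 := v_frob_iter v h.prime hXle (hc1 s) hvp hρ1 hδ1 hρδ (hcoh s) s
    rw [h1]
    exact le_trans h2 (mul_le_mul' (hcoh s) le_rfl)
  have hchain : ∀ N k, v (x (N + k) - x N) ≤ ρ * δ ^ N := by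
    intro N k
    induction k with
    | zero => simp
    | succ k ih =>
      have hdec : x (N+k+1) - x N = (x (N+k+1) - x (N+k)) + (x (N+k) - x N) := by ring
      rw [show N + (k+1) = (N+k)+1 by ring, hdec]
      refine le_trans (v.map_add _ _) (max_le (le_trans (hstep (N+k)) ?_) ih)
      rw [pow_add]
      rw [← mul_assoc]
      calc ρ * δ ^ N * δ ^ k ≤ ρ * δ ^ N * 1 :=
        mul_le_mul' le_rfl (pow_le_one₀ zero_le' hδ1)
      _ = ρ * δ ^ N := mul_one _
  have hge : ∀ N s, N ≤ s → v (x s - x N) ≤ ρ * δ ^ N := by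
    intro N s hNs
    obtain ⟨k, rfl⟩ := Nat.exists_eq_add_of_le hNs
    exact hchain N k
  have hcauchy : CauchySeq x := by
    rw [(Valued.hasBasis_uniformity K QM0).cauchySeq_iff]
    rintro γu -
    have hγne : (MonoidWithZeroHom.ValueGroup₀.embedding γu.1 : QM0) ≠ 0 := by
      intro h0; apply γu.ne_zero
      apply MonoidWithZeroHom.ValueGroup₀.embedding_strictMono.injective; rw [h0, map_zero]
    obtain ⟨N, hN⟩ := exists_expQ_pow_lt hrpos (1/(e:ℚ)) hγne
    refine ⟨N, fun a ha b hb => ?_⟩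
    simp only [Set.mem_setOf_eq]
    rw [Valuation.restrict_lt_iff_lt_embedding]
    have hdec : x b - x a = (x b - x N) - (x a - x N) := by ring
    rw [hdec]
    refine lt_of_le_of_lt (le_trans (v.map_sub _ _) (max_le (hge N b hb) (hge N a ha))) ?_
    rw [hρdef, hδdef] at *
    exact hN
  obtain ⟨L, hL⟩ := cauchySeq_tendsto_of_complete hcauchy
  have hconv : ∀ γ : QM0, γ ≠ 0 → ∃ N, ∀ s ≥ N, v (x s - L) < γ := by
    intro γ hγ
    have hmem : {y : K | v (y - L) < γ} ∈ nhds L := by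
      obtain ⟨s, hs⟩ := exists_expQ_pow_lt one_pos 0 hγ
      have hz : v ((p:K)^s) ≠ 0 := by
        rw [v.map_pow, hv, h.v_p]; exact pow_ne_zero _ (expQ_ne_zero 1)
      have hzγ : v ((p:K)^s) < γ := by
        rw [v.map_pow, hv, h.v_p]; rwa [expQ_zero, one_mul] at hs
      rw [Valued.mem_nhds]
      refine ⟨Units.mk0 (v.restrict ((p:K)^s))
        ((Valuation.restrict_pos_iff (v := v) _).mpr (zero_lt_iff.mpr hz)).ne', fun y hy => ?_⟩
      simp only [Set.mem_setOf_eq, Units.val_mk0, Valuation.restrict_lt_iff] at hy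
      exact lt_trans ((Valuation.restrict_lt_iff (v := v)).mp hy) hzγ
    have hev : ∀ᶠ s in atTop, v (x s - L) < γ := hL.eventually hmem
    exact eventually_atTop.mp hev
  refine ⟨L, ?_, hconv⟩
  obtain ⟨N, hN⟩ := hconv 1 one_ne_zero
  have hLe : L = x N - (x N - L) := by ring
  rw [hLe]
  exact le_trans (v.map_sub _ _) (max_le (hx1 N) (le_of_lt (hN N le_rfl)))

/-- The limit of a coherent sequence of `p^s`-th powers is a Teichmüller representative. -/
lemma teich_of_coherent {p e : ℕ} (h : IsCompleteDVF K p e) (c : ℕ → K)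
    (hc1 : ∀ s, Valued.v (c s) ≤ 1)
    (hcoh : ∀ s, Valued.v (c (s+1) ^ p - c s) ≤ expQ (1 / e)) :
    ∃ L ∈ Teich K p,
      ∀ γ : QM0, γ ≠ 0 → ∃ N, ∀ s ≥ N, Valued.v (c s ^ p ^ s - L) < γ := by
  obtain ⟨L, hL1, hLconv⟩ := exists_lim h c hc1 hcoh
  refine ⟨L, ⟨hL1, fun t => ?_⟩, hLconv⟩
  obtain ⟨Lt, hLt1, hLtconv⟩ := exists_lim h (fun s => c (s + t))
    (fun s => hc1 (s+t)) (fun s => by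
      have := hcoh (s+t)
      rwa [show s + t + 1 = (s + 1) + t by ring] at this)
  refine ⟨Lt, hLt1, ?_⟩
  by_contra hne
  have hsub0 : Valued.v (Lt ^ p ^ t - L) ≠ 0 := by
    rw [Ne, Valuation.zero_iff, sub_eq_zero]
    exact hne
  obtain ⟨N1, hN1⟩ := hLtconv _ hsub0
  obtain ⟨N2, hN2⟩ := hLconv _ hsub0
  set s := max N1 N2 with hs
  have h1 : Valued.v (c (s + t) ^ p ^ s - Lt) < Valued.v (Lt ^ p ^ t - L) :=
    hN1 s (le_max_left _ _)
  have h2 : Valued.v (c (s + t) ^ p ^ (s + t) - L) < Valued.v (Lt ^ p ^ t - L) :=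
    hN2 (s+t) (le_trans (le_max_right _ _) (Nat.le_add_right s t))
  have hcle : Valued.v (c (s+t) ^ p ^ s) ≤ 1 := by
    rw [Valuation.map_pow]
    exact pow_le_one₀ zero_le' (hc1 (s+t))
  have h3 : Valued.v (Lt ^ p ^ t - c (s+t) ^ p ^ (s + t)) <
      Valued.v (Lt ^ p ^ t - L) := by
    have hee : c (s+t) ^ p ^ (s + t) = (c (s+t) ^ p ^ s) ^ p ^ t := by
      rw [← pow_mul, ← pow_add]
    rw [hee]
    refine lt_of_le_of_lt (v_pow_sub_pow_le _ hLt1 hcle _) ?_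
    rw [Valuation.map_sub_swap]
    exact h1
  have h4 : Valued.v (Lt ^ p ^ t - L) < Valued.v (Lt ^ p ^ t - L) := by
    have hdec : Lt ^ p ^ t - L =
        (Lt ^ p ^ t - c (s+t) ^ p ^ (s+t)) + (c (s+t) ^ p ^ (s+t) - L) := by ring
    conv_lhs => rw [hdec]
    exact lt_of_le_of_lt (Valuation.map_add _ _ _) (max_lt h3 h2)
  exact lt_irrefl _ h4

end DVFLemmas


section MainHelpers

variable {K₁ K₂ : Type*} [Field K₁] [Field K₂] [Valued K₁ QM0] [Valued K₂ QM0]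
variable {p e₁ e₂ n m : ℕ}

lemma rep_val_eq
    (f : HypHom (Valued.v : Valuation K₁ QM0) (hnγ e₁ n)
      (Valued.v : Valuation K₂ QM0) (hnγ e₂ m))
    {x : K₁} {x' : K₂}
    (hx : f.toFun (hmk Valued.v (hnγ e₁ n) x) = hmk Valued.v (hnγ e₂ m) x')
    (hv : Valued.v x = 1) : Valued.v x' = 1 := by
  have h1 := f.val_le_iff' x 1 x' 1 hx f.map_one'
  have h2 := f.val_le_iff' 1 x 1 x' f.map_one' hx
  rw [Valuation.map_one, Valuation.map_one] at h1 h2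
  exact le_antisymm (h1.mp hv.le) (h2.mp hv.ge)

lemma not_map_zero (h₁ : IsCompleteDVF K₁ p e₁)
    (f : HypHom (Valued.v : Valuation K₁ QM0) (hnγ e₁ n)
      (Valued.v : Valuation K₂ QM0) (hnγ e₂ m))
    {x : K₁} (h0 : x ≠ 0)
    (hmap : f.toFun (hmk Valued.v (hnγ e₁ n) x) = hmk Valued.v (hnγ e₂ m) 0) : False := by
  have h1 := f.val_le_iff' x 0 0 0 hmap f.map_zero'
  have h2 : Valued.v x ≤ Valued.v (0:K₁) := h1.mpr le_rfl
  rw [Valuation.map_zero, le_zero_iff, Valuation.zero_iff] at h2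
  exact h0 h2

end MainHelpers

section SepLemma

variable {K : Type*} [Field K] [Valued K QM0]

lemma rmin_pos {p e : ℕ} (h : IsCompleteDVF K p e) : 0 < min 1 (((p:ℚ) - 1)/e) := by
  have he : (0:ℚ) < e := by exact_mod_cast h.epos
  have hp2 : (2:ℚ) ≤ (p:ℚ) := by exact_mod_cast h.prime.two_le
  refine lt_min one_pos ?_
  have h3 : (0:ℚ) < (p:ℚ) - 1 := by linarith
  positivity

lemma dvf_frob_iter {p e : ℕ} (h : IsCompleteDVF K p e) {x y : K}
    (hx : Valued.v x ≤ 1) (hy : Valued.v y ≤ 1)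
    (hd : Valued.v (x - y) ≤ expQ (1/(e:ℚ))) (s : ℕ) :
    Valued.v (x ^ p ^ s - y ^ p ^ s) ≤
      expQ (1/(e:ℚ)) * expQ (min 1 (((p:ℚ) - 1)/e)) ^ s := by
  have he : (0:ℚ) < e := by exact_mod_cast h.epos
  have hrpos := rmin_pos h
  have hρ1 : expQ (1/(e:ℚ)) ≤ 1 := by rw [← expQ_zero, expQ_le_expQ]; positivity
  have hδ1 : expQ (min 1 (((p:ℚ) - 1)/e)) ≤ 1 := by
    rw [← expQ_zero, expQ_le_expQ]; exact hrpos.le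
  have hvp : Valued.v (p : K) ≤ expQ (min 1 (((p:ℚ) - 1)/e)) := by
    rw [h.v_p, expQ_le_expQ]
    exact min_le_left _ _
  have hρδ : expQ (1/(e:ℚ)) ^ (p - 1) ≤ expQ (min 1 (((p:ℚ) - 1)/e)) := by
    rw [expQ_pow, expQ_le_expQ]
    have hc : ((p - 1 : ℕ):ℚ) = (p:ℚ) - 1 := by
      have := h.prime.one_le
      push_cast [Nat.cast_sub this]
      ring
    rw [hc]
    calc min 1 (((p:ℚ) - 1)/e) ≤ ((p:ℚ) - 1)/e := min_le_right _ _
    _ = ((p:ℚ) - 1) * (1/e) := by ring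
  have h2 := v_frob_iter (Valued.v) h.prime hx hy hvp hρ1 hδ1 hρδ hd s
  exact le_trans h2 (mul_le_mul' hd le_rfl)

lemma teich_sep {p e : ℕ} (h : IsCompleteDVF K p e) {a a' : K}
    (ha : a ∈ Teich K p) (ha' : a' ∈ Teich K p)
    (hsub : Valued.v (a - a') < 1) : a = a' := by
  by_contra hne
  have hd0 : Valued.v (a - a') ≠ 0 := by
    rw [Ne, Valuation.zero_iff, sub_eq_zero]; exact hne
  have key : ∀ s : ℕ, Valued.v (a - a') ≤
      expQ (1/(e:ℚ)) * expQ (min 1 (((p:ℚ) - 1)/e)) ^ s := by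
    intro s
    obtain ⟨b, hb1, hb2⟩ := ha.2 s
    obtain ⟨b', hb1', hb2'⟩ := ha'.2 s
    have hlt : Valued.v (b - b') < 1 := by
      apply v_frob_rev_iter (Valued.v) h.prime hb1 hb1' (vp_lt_one h) s
      rw [hb2, hb2']; exact hsub
    have hle : Valued.v (b - b') ≤ expQ (1/(e:ℚ)) := lt_one_le_unif h hlt
    have h3 := dvf_frob_iter h hb1 hb1' hle s
    rwa [hb2, hb2'] at h3
  obtain ⟨N, hN⟩ := exists_expQ_pow_lt (rmin_pos h) (1/(e:ℚ)) hd0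
  exact absurd (key N) (not_le.mpr hN)

end SepLemma

section KeyMap

variable {K₁ K₂ : Type*} [Field K₁] [Field K₂] [Valued K₁ QM0] [Valued K₂ QM0]
variable {p e₁ e₂ n m : ℕ}

lemma key_map (h₁ : IsCompleteDVF K₁ p e₁) (h₂ : IsCompleteDVF K₂ p e₂)
    (hn : 1 ≤ n) (hm : 1 ≤ m)
    (f : HypHom (Valued.v : Valuation K₁ QM0) (hnγ e₁ n)
      (Valued.v : Valuation K₂ QM0) (hnγ e₂ m))
    {a : K₁} (ha : a ∈ Teich K₁ p) :
    ∃ b ∈ Teich K₂ p, f.toFun (hmk Valued.v (hnγ e₁ n) a) = hmk Valued.v (hnγ e₂ m) b := by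
  rcases eq_or_ne a 0 with rfl | h0
  · exact ⟨0, ⟨by simp, fun s => ⟨0, by simp,
      zero_pow (pow_ne_zero s h₂.prime.ne_zero)⟩⟩, f.map_zero'⟩
  have hγ2ne := hnγ_ne_zero e₂ m
  have hγ21 := hnγ_le_one h₂.epos hm
  have hva : Valued.v a = 1 := teich_val h₁ ha h0
  obtain ⟨a'', ha''⟩ := Hyp.exists_rep' (f.toFun (hmk Valued.v (hnγ e₁ n) a))
  have hva'' : Valued.v a'' = 1 := rep_val_eq f ha''.symm hva
  have hva''ne : Valued.v a'' ≠ 0 := by rw [hva'']; exact one_ne_zero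
  have hsel : ∀ s : ℕ, ∃ bb : K₁ × K₂, Valued.v bb.1 ≤ 1 ∧ bb.1 ^ p ^ s = a ∧
      Valued.v bb.2 ≤ 1 ∧
      f.toFun (hmk Valued.v (hnγ e₁ n) bb.1) = hmk Valued.v (hnγ e₂ m) bb.2 := by
    intro s
    obtain ⟨b, hb1, hb2⟩ := ha.2 s
    obtain ⟨b', hb'⟩ := Hyp.exists_rep' (f.toFun (hmk Valued.v (hnγ e₁ n) b))
    refine ⟨(b, b'), hb1, hb2, ?_, hb'.symm⟩
    have h1 := f.val_le_iff' b 1 b' 1 hb'.symm f.map_one'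
    rw [Valuation.map_one, Valuation.map_one] at h1
    exact h1.mp hb1
  choose bb hbb1 hbb2 hbb3 hbb4 using hsel
  set c : ℕ → K₂ := fun s => (bb s).2 with hc
  have hclass : ∀ s, hrel (Valued.v) (hnγ e₂ m) a'' (c s ^ p ^ s) := by
    intro s
    rw [← hmk_eq_iff (Valued.v) hγ2ne hγ21]
    have h3 := HypHom.map_pow f (hbb4 s) (p ^ s)
    rw [hbb2 s] at h3
    exact ha''.trans h3
  have hsub : ∀ s, Valued.v (c s ^ p ^ s - a'') < hnγ e₂ m := by
    intro s
    have h3 := sub_lt_of_hrel (Valued.v) hva''ne (hclass s)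
    rwa [hva'', one_mul] at h3
  have hcoh : ∀ s, Valued.v (c (s+1) ^ p - c s) ≤ expQ (1/(e₂:ℚ)) := by
    intro s
    apply lt_one_le_unif h₂
    have hpow1 : Valued.v (c (s+1) ^ p) ≤ 1 := by
      rw [Valuation.map_pow]; exact pow_le_one₀ zero_le' (hbb3 (s+1))
    apply v_frob_rev_iter (Valued.v) h₂.prime hpow1 (hbb3 s) (vp_lt_one h₂) s
    rw [← pow_mul, ← pow_succ']
    have hdec : c (s+1) ^ p ^ (s+1) - c s ^ p ^ s =
        (c (s+1) ^ p ^ (s+1) - a'') - (c s ^ p ^ s - a'') := by ring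
    rw [hdec]
    refine lt_of_le_of_lt (Valuation.map_sub _ _ _) (max_lt ?_ ?_)
    · exact lt_of_lt_of_le (hsub (s+1)) hγ21
    · exact lt_of_lt_of_le (hsub s) hγ21
  obtain ⟨L, hLT, hLconv⟩ := teich_of_coherent h₂ c hbb3 hcoh
  refine ⟨L, hLT, ?_⟩
  rw [← ha'']
  rw [hmk_eq_iff (Valued.v) hγ2ne hγ21]
  apply hrel_of_sub (Valued.v) hva''ne
  rw [hva'', one_mul]
  obtain ⟨N, hN⟩ := hLconv _ hγ2ne
  have h5 := hN N le_rfl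
  have hdec : L - a'' = (L - c N ^ p ^ N) + (c N ^ p ^ N - a'') := by ring
  rw [hdec]
  refine lt_of_le_of_lt (Valuation.map_add _ _ _) (max_lt ?_ (hsub N))
  rw [Valuation.map_sub_swap]
  exact h5

end KeyMap

/-- Let `K₁`, `K₂` be complete discrete valued fields of mixed
characteristic `(0,p)` with perfect residue fields, with Teichmüller sets `S(K₁)`,
`S(K₂)`, and let `f : H_n(K₁) → H_m(K₂)` be a homomorphism of valued hyperfields.
Then `f` maps `H_n(S(K₁))` into `H_m(S(K₂))`, injectively. -/
theorem statement5 {K₁ K₂ : Type*} [Field K₁] [Field K₂] [Valued K₁ QM0] [Valued K₂ QM0]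
    (p e₁ e₂ n m : ℕ) (h₁ : IsCompleteDVF K₁ p e₁) (h₂ : IsCompleteDVF K₂ p e₂)
    (hn : 1 ≤ n) (hm : 1 ≤ m)
    (f : HypHom (Valued.v : Valuation K₁ QM0) (hnγ e₁ n)
      (Valued.v : Valuation K₂ QM0) (hnγ e₂ m)) :
    (∀ a ∈ Teich K₁ p, ∃ b ∈ Teich K₂ p,
      f.toFun (hmk Valued.v (hnγ e₁ n) a) = hmk Valued.v (hnγ e₂ m) b) ∧
    (∀ a ∈ Teich K₁ p, ∀ a' ∈ Teich K₁ p,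
      f.toFun (hmk Valued.v (hnγ e₁ n) a) = f.toFun (hmk Valued.v (hnγ e₁ n) a') →
        hmk (Valued.v : Valuation K₁ QM0) (hnγ e₁ n) a = hmk Valued.v (hnγ e₁ n) a') := by
  have hγ1ne := hnγ_ne_zero e₁ n
  have hγ11 := hnγ_le_one h₁.epos hn
  have hγ2ne := hnγ_ne_zero e₂ m
  have hγ21 := hnγ_le_one h₂.epos hm
  constructor
  · intro a ha
    exact key_map h₁ h₂ hn hm f ha
  · intro a ha a' ha' heq
    suffices h : a = a' by rw [h]
    by_contra hne
    rcases eq_or_ne a 0 with rfl | h0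
    · rcases eq_or_ne a' 0 with rfl | h0'
      · exact hne rfl
      · exact not_map_zero h₁ f h0' (heq.symm.trans f.map_zero')
    rcases eq_or_ne a' 0 with rfl | h0'
    · exact not_map_zero h₁ f h0 (heq.trans f.map_zero')
    have hva : Valued.v a = 1 := teich_val h₁ ha h0
    have hva' : Valued.v a' = 1 := teich_val h₁ ha' h0'
    have hsep : ¬ Valued.v (a - a') < 1 := fun hlt => hne (teich_sep h₁ ha ha' hlt)
    have hd1 : Valued.v (a - a') = 1 :=
      le_antisymm (le_trans (Valuation.map_sub _ _ _) (max_le hva.le hva'.le))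
        (not_lt.mp hsep)
    obtain ⟨a'', ha''⟩ := Hyp.exists_rep' (f.toFun (hmk Valued.v (hnγ e₁ n) a))
    obtain ⟨c'', hc''⟩ := Hyp.exists_rep' (f.toFun (hmk Valued.v (hnγ e₁ n) (a - a')))
    have hva'' : Valued.v a'' = 1 := rep_val_eq f ha''.symm hva
    have hvc'' : Valued.v c'' = 1 := by
      have h1 := f.val_le_iff' (a - a') a c'' a'' hc''.symm ha''.symm
      have h2 := f.val_le_iff' a (a - a') a'' c'' ha''.symm hc''.symm
      rw [hd1, hva, hva''] at h1 h2
      exact le_antisymm (h1.mp le_rfl) (h2.mp le_rfl)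
    have hsum : hsumMem Valued.v (hnγ e₁ n) a' (a - a') a :=
      ⟨a', a - a', hrel_refl _ hγ1ne a', hrel_refl _ hγ1ne (a - a'), by
        rw [show a' + (a - a') = a by ring]; exact hrel_refl _ hγ1ne a⟩
    have hfa' : f.toFun (hmk Valued.v (hnγ e₁ n) a') = hmk Valued.v (hnγ e₂ m) a'' :=
      heq.symm.trans ha''.symm
    have hsum2 : hsumMem Valued.v (hnγ e₂ m) a'' c'' a'' :=
      f.map_hsum' a' (a - a') a a'' c'' a'' hfa' hc''.symm ha''.symm hsum
    obtain ⟨x, y, ⟨u1, hu1, hxe⟩, ⟨u2, hu2, hye⟩, ⟨u3, hu3, hae⟩⟩ := hsum2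
    have hvu1 : Valued.v u1 = 1 := v_unit_of_close _ hγ21 hu1
    have hvu2 : Valued.v u2 = 1 := v_unit_of_close _ hγ21 hu2
    have hvu3 : Valued.v u3 = 1 := v_unit_of_close _ hγ21 hu3
    have hu30 : u3 ≠ 0 := (Valuation.ne_zero_iff _).mp (by rw [hvu3]; exact one_ne_zero)
    have hxy : x + y = a'' * u3⁻¹ := by
      rw [hae]; field_simp
    have hysplit : y = a'' * (u3⁻¹ - u1) := by
      calc y = (x + y) - x := by ring
      _ = a'' * u3⁻¹ - a'' * u1 := by rw [hxy, hxe]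
      _ = a'' * (u3⁻¹ - u1) := by ring
    have hvy1 : Valued.v y = 1 := by
      rw [hye, Valuation.map_mul, hvc'', hvu2, one_mul]
    have hvylt : Valued.v y < 1 := by
      rw [hysplit, Valuation.map_mul, hva'', one_mul]
      have hu3inv : Valued.v (u3⁻¹ - 1) < hnγ e₂ m := by
        have he : u3⁻¹ - 1 = u3⁻¹ * (1 - u3) := by field_simp
        rw [he, Valuation.map_mul, map_inv₀, hvu3, inv_one, one_mul,
          Valuation.map_sub_swap]
        exact hu3
      have h6 : Valued.v (u3⁻¹ - u1) ≤
          max (Valued.v (u3⁻¹ - 1)) (Valued.v (u1 - 1)) := by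
        have hdec : u3⁻¹ - u1 = (u3⁻¹ - 1) - (u1 - 1) := by ring
        rw [hdec]; exact Valuation.map_sub _ _ _
      exact lt_of_le_of_lt h6 (lt_of_lt_of_le (max_lt hu3inv hu1) hγ21)
    rw [hvy1] at hvylt
    exact lt_irrefl _ hvylt
end
end

section
/- Let K₁ and K₂ be discrete valued fields of mixed characteristic (0, p) with the same ramification index e, let n > e, and let f : R_n(K₁) → R_n(K₂) be a ring homomorphism. Then for any uniformizer π₁ of K₁ and any uniformizer π₂ of K₂, there is a unit u of R_n(K₂) such that f(π₁ + m₁^n) = u · (π₂ + m₂^n); that is, f maps the class of a uniformizer to a generator of the maximal ideal of R_n(K₂). -/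
open Multiplicative WithZero Filter

noncomputable section

section Statement15

set_option synthInstance.maxHeartbeats 1000000
set_option maxHeartbeats 1000000

/-- Additive-integer-valued value group. -/
abbrev ZM0 : Type := WithZero (Multiplicative ℤ)

/-- `expZ k` corresponds to the additive value `k ∈ ℤ`. -/
def expZ (k : ℤ) : ZM0 := ((Multiplicative.ofAdd (-k) : Multiplicative ℤ) : ZM0)

theorem expZ_le_one {k : ℤ} (hk : 0 ≤ k) : expZ k ≤ (1 : ZM0) := by
  unfold expZ
  rw [← WithZero.coe_one, WithZero.coe_le_coe, ← ofAdd_zero, Multiplicative.ofAdd_le]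
  exact neg_nonpos.mpr hk

variable {K : Type*} [Field K] (v : Valuation K ZM0) (n : ℕ)

/-- The maximal ideal of the valuation ring. -/
def mIdeal : Ideal v.valuationSubring :=
  IsLocalRing.maximalIdeal v.valuationSubring

/-- The `n`-th residue ring `R_n(K) = R_K/𝔪_K^n`. -/
abbrev ResRing : Type _ := v.valuationSubring ⧸ (mIdeal v) ^ n


section Aux15S
variable {K : Type*} [Field K] {v : Valuation K ZM0}

lemma expZ_zero : expZ 0 = 1 := by simp [expZ]

lemma expZ_add (a b : ℤ) : expZ (a + b) = expZ a * expZ b := by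
  rw [expZ, expZ, expZ, ← WithZero.coe_mul, ← ofAdd_add, neg_add]

lemma expZ_ne_zero (a : ℤ) : expZ a ≠ 0 := WithZero.coe_ne_zero

lemma expZ_le_expZ {a b : ℤ} : expZ a ≤ expZ b ↔ b ≤ a := by
  rw [expZ, expZ, WithZero.coe_le_coe, Multiplicative.ofAdd_le, neg_le_neg_iff]

lemma expZ_lt_expZ {a b : ℤ} : expZ a < expZ b ↔ b < a := by
  rw [expZ, expZ, WithZero.coe_lt_coe, Multiplicative.ofAdd_lt, neg_lt_neg_iff]

lemma expZ_inj {a b : ℤ} : expZ a = expZ b ↔ a = b :=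
  ⟨fun h => le_antisymm (expZ_le_expZ.mp h.ge) (expZ_le_expZ.mp h.le), fun h => h ▸ rfl⟩

lemma expZ_pow (a : ℤ) (k : ℕ) : expZ a ^ k = expZ (k * a) := by
  induction k with
  | zero => simp [expZ_zero]
  | succ m ih => rw [pow_succ, ih, ← expZ_add]; congr 1; push_cast; ring

lemma exists_expZ {x : ZM0} (hx : x ≠ 0) : ∃ k : ℤ, x = expZ k := by
  induction x using WithZero.recZeroCoe with
  | zero => exact absurd rfl hx
  | coe m => exact ⟨-Multiplicative.toAdd m, by simp [expZ]⟩

lemma max_expZ (a b : ℤ) : max (expZ a) (expZ b) = expZ (min a b) := by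
  rcases le_total a b with h | h
  · rw [min_eq_left h, max_eq_left (expZ_le_expZ.mpr h)]
  · rw [min_eq_right h, max_eq_right (expZ_le_expZ.mpr h)]

lemma le_expZ_one_of_lt_one {x : ZM0} (hx : x < 1) : x ≤ expZ 1 := by
  rcases eq_or_ne x 0 with rfl | h
  · exact zero_le'
  · obtain ⟨k, rfl⟩ := exists_expZ h
    rw [← expZ_zero] at hx
    have := expZ_lt_expZ.mp hx
    exact expZ_le_expZ.mpr (by omega)

variable {K : Type*} [Field K] {v : Valuation K ZM0}

lemma vsr_integers (v : Valuation K ZM0) : v.Integers v.valuationSubring :=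
  { hom_inj := Subtype.coe_injective
    map_le_one := fun r => r.2
    exists_of_le_one := fun r hr => ⟨⟨r, hr⟩, rfl⟩ }

lemma isUnit_iff_val_eq_one {a : v.valuationSubring} : IsUnit a ↔ v (a : K) = 1 :=
  (vsr_integers v).isUnit_iff_valuation_eq_one

lemma mem_mIdeal_pow_iff' {π : v.valuationSubring} (hπ : v (π : K) = expZ 1)
    (k : ℕ) (a : v.valuationSubring) :
    a ∈ ((mIdeal v)) ^ k ↔ v (a : K) ≤ expZ k := by
  have hspan : (mIdeal v) = Ideal.span {π} := by
    ext b
    simp only [mIdeal]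
    rw [IsLocalRing.mem_maximalIdeal, mem_nonunits_iff, Ideal.mem_span_singleton]
    constructor
    · intro hb
      have hb1 : v (b : K) < 1 := lt_of_le_of_ne b.2 (by simpa [isUnit_iff_val_eq_one] using hb)
      have hle : v ((b : K)) ≤ v ((π : K)) := by rw [hπ]; exact le_expZ_one_of_lt_one hb1
      exact (vsr_integers v).dvd_of_le hle
    · intro hb hcontra
      have := isUnit_iff_val_eq_one.mp (isUnit_of_dvd_unit hb hcontra)
      rw [hπ, ← expZ_zero, expZ_inj] at this
      norm_num at this
  have hval : v ((algebraMap v.valuationSubring K) (π ^ k)) = expZ k := by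
    rw [map_pow, map_pow]
    show v ((π : K)) ^ k = _
    rw [hπ, expZ_pow, mul_one]
  rw [hspan, Ideal.span_singleton_pow, Ideal.mem_span_singleton,
    ← (vsr_integers v).le_iff_dvd, hval]
  rfl

lemma decompose {π : v.valuationSubring} (hπ : v (π : K) = expZ 1)
    {a : v.valuationSubring} {k : ℕ} (ha : v (a : K) = expZ k) :
    ∃ b : v.valuationSubring, v (b : K) = 1 ∧ a = π ^ k * b := by
  have hdvd : π ^ k ∣ a := by
    apply (vsr_integers v).dvd_of_le
    show v ((a : K)) ≤ v (((π ^ k : v.valuationSubring) : K))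
    push_cast
    rw [map_pow, hπ, ha, expZ_pow, mul_one]
  obtain ⟨b, hb⟩ := hdvd
  refine ⟨b, ?_, hb⟩
  have : v (a : K) = expZ k * v (b : K) := by
    rw [hb]; push_cast; rw [map_mul, map_pow, hπ, expZ_pow, mul_one]
  rw [ha] at this
  exact (mul_left_cancel₀ (expZ_ne_zero k) (this ▸ (mul_one (expZ (k:ℤ))))).symm

lemma val_eq_one_of_isUnit_mk {n : ℕ} (hn : 0 < n) {π : v.valuationSubring}
    (hπ : v (π : K) = expZ 1) {w : v.valuationSubring}
    (hw : IsUnit (Ideal.Quotient.mk (((mIdeal v)) ^ n) w)) :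
    v (w : K) = 1 := by
  by_contra h
  have h1 : v (w : K) < 1 := lt_of_le_of_ne w.2 h
  have hpow : v (((w ^ n : v.valuationSubring) : K)) ≤ expZ n := by
    push_cast
    rw [map_pow]
    calc v ((w:K)) ^ n ≤ expZ 1 ^ n := pow_le_pow_left' (le_expZ_one_of_lt_one h1) n
    _ = expZ n := by rw [expZ_pow, mul_one]
  have hz : (Ideal.Quotient.mk (((mIdeal v)) ^ n) w) ^ n = 0 := by
    rw [← map_pow, Ideal.Quotient.eq_zero_iff_mem, mem_mIdeal_pow_iff' hπ]
    exact hpow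
  have h01 := (isUnit_zero_iff).mp (hz ▸ hw.pow n)
  have : (1 : v.valuationSubring) ∈ ((mIdeal v)) ^ n := by
    rw [← Ideal.Quotient.eq_zero_iff_mem, map_one, ← h01]
  rw [mem_mIdeal_pow_iff' hπ] at this
  simp only [OneMemClass.coe_one, map_one] at this
  rw [← expZ_zero, expZ_le_expZ] at this
  omega

lemma resring_structure {n : ℕ} (hn : 0 < n) {π : v.valuationSubring}
    (hπ : v (π : K) = expZ 1)
    {z : v.valuationSubring ⧸ ((mIdeal v)) ^ n} (hz : z ≠ 0) :
    ∃ (k : ℕ) (c : (v.valuationSubring ⧸ ((mIdeal v)) ^ n)ˣ),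
      k < n ∧ z = (c : v.valuationSubring ⧸ ((mIdeal v)) ^ n) *
        (Ideal.Quotient.mk (((mIdeal v)) ^ n) π) ^ k := by
  obtain ⟨a, rfl⟩ := Ideal.Quotient.mk_surjective z
  rw [Ne, Ideal.Quotient.eq_zero_iff_mem, mem_mIdeal_pow_iff' hπ] at hz
  have ha0 : v (a : K) ≠ 0 := fun h => hz (h ▸ zero_le')
  obtain ⟨m, hm⟩ := exists_expZ ha0
  have hm0 : 0 ≤ m := by
    have : expZ m ≤ expZ 0 := by rw [expZ_zero, ← hm]; exact a.2
    exact expZ_le_expZ.mp this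
  have hmn : m < n := by
    by_contra h
    exact hz (hm ▸ expZ_le_expZ.mpr (by omega))
  have hm' : v (a : K) = expZ (m.toNat) := by rw [hm, Int.toNat_of_nonneg hm0]
  obtain ⟨b, hvb, hab⟩ := decompose hπ hm'
  have hub : IsUnit (Ideal.Quotient.mk (((mIdeal v)) ^ n) b) :=
    (isUnit_iff_val_eq_one.mpr hvb).map _
  refine ⟨m.toNat, hub.unit, by omega, ?_⟩
  rw [IsUnit.unit_spec, ← map_pow, ← map_mul, mul_comm, ← hab]

end Aux15S

/-- Let `K₁`, `K₂` be discrete valued fields of mixed characteristic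
`(0,p)` with the same ramification index `e`, let `n > e`, and `f : R_n(K₁) → R_n(K₂)`
a ring homomorphism.  Then for any uniformizers `π₁` of `K₁` and `π₂` of `K₂` there is a
unit `u` of `R_n(K₂)` with `f(π₁ + 𝔪₁^n) = u ⬝ (π₂ + 𝔪₂^n)`. -/
theorem statement15 {K₁ K₂ : Type*} [Field K₁] [Field K₂]
    (v₁ : Valuation K₁ ZM0) (v₂ : Valuation K₂ ZM0) (p e n : ℕ) (hp : p.Prime)
    (hchar₁ : CharZero K₁) (hchar₂ : CharZero K₂) (he : 0 < e) (hn : e < n)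
    -- mixed characteristic (0,p) with ramification index e (ν(p) = e):
    (hvp₁ : v₁ (p : K₁) = expZ (e : ℤ)) (hvp₂ : v₂ (p : K₂) = expZ (e : ℤ))
    -- the valuations are surjective onto ℤ:
    (hd₁ : ∃ π : K₁, v₁ π = expZ 1) (hd₂ : ∃ π : K₂, v₂ π = expZ 1)
    (f : ResRing v₁ n →+* ResRing v₂ n) :
    ∀ (π₁ : K₁) (π₂ : K₂) (h₁ : v₁ π₁ = expZ 1) (h₂ : v₂ π₂ = expZ 1),
      ∃ u : (ResRing v₂ n)ˣ,
        f (Ideal.Quotient.mk _ ⟨π₁, (Valuation.mem_valuationSubring_iff _ _).mpr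
            (h₁ ▸ expZ_le_one (by norm_num))⟩) =
          (u : ResRing v₂ n) *
            Ideal.Quotient.mk _ ⟨π₂, (Valuation.mem_valuationSubring_iff _ _).mpr
              (h₂ ▸ expZ_le_one (by norm_num))⟩ := by
  intro π₁ π₂ h₁ h₂
  have hn0 : 0 < n := lt_of_le_of_lt (Nat.zero_le e) hn
  suffices hgen : ∀ (a₁ : v₁.valuationSubring) (a₂ : v₂.valuationSubring),
      (a₁ : K₁) = π₁ → (a₂ : K₂) = π₂ →
      ∃ u : (ResRing v₂ n)ˣ,
        f (Ideal.Quotient.mk ((mIdeal v₁) ^ n) a₁) =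
          (u : ResRing v₂ n) * Ideal.Quotient.mk ((mIdeal v₂) ^ n) a₂ by
    exact hgen _ _ rfl rfl
  intro a₁ a₂ ha₁ ha₂
  have hva₁ : v₁ (a₁ : K₁) = expZ 1 := by rw [ha₁]; exact h₁
  have hva₂ : v₂ (a₂ : K₂) = expZ 1 := by rw [ha₂]; exact h₂
  set Q₁ : v₁.valuationSubring →+* ResRing v₁ n := Ideal.Quotient.mk ((mIdeal v₁) ^ n) with hQ₁
  set Q₂ : v₂.valuationSubring →+* ResRing v₂ n := Ideal.Quotient.mk ((mIdeal v₂) ^ n) with hQ₂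
  -- the valuation of p in each subring
  have hp₁K : v₁ (((p : v₁.valuationSubring) : K₁)) = expZ e := by push_cast; exact hvp₁
  have hp₂K : v₂ (((p : v₂.valuationSubring) : K₂)) = expZ e := by push_cast; exact hvp₂
  obtain ⟨b₁, hb₁v, hb₁⟩ := decompose hva₁ hp₁K
  obtain ⟨b₂, hb₂v, hb₂⟩ := decompose hva₂ hp₂K
  set x : ResRing v₂ n := f (Q₁ a₁) with hx
  set P : ResRing v₂ n := Q₂ a₂ with hP
  have key : x ^ e * f (Q₁ b₁) = P ^ e * Q₂ b₂ := by
    have l1 : Q₁ ((p : v₁.valuationSubring)) = ((p : ℕ) : ResRing v₁ n) := map_natCast Q₁ p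
    have l2 : Q₂ ((p : v₂.valuationSubring)) = ((p : ℕ) : ResRing v₂ n) := map_natCast Q₂ p
    have : x ^ e * f (Q₁ b₁) = f (Q₁ ((p : v₁.valuationSubring))) := by
      rw [hb₁, map_mul, map_pow, map_mul, map_pow]
    rw [this, l1, map_natCast f, ← l2, hb₂, map_mul, map_pow]
  have hQ2ne : P ^ e * Q₂ b₂ ≠ 0 := by
    rw [hP, ← map_pow, ← map_mul, Ne, Ideal.Quotient.eq_zero_iff_mem,
      mem_mIdeal_pow_iff' hva₂]
    push_cast
    rw [map_mul, map_pow, hva₂, hb₂v, expZ_pow, mul_one, mul_one, expZ_le_expZ]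
    intro hcon
    omega
  have hx0 : x ≠ 0 := by
    intro h
    apply hQ2ne
    rw [← key, h, zero_pow (by omega : e ≠ 0), zero_mul]
  obtain ⟨k, c, hk, hxc⟩ := resring_structure hn0 hva₂ hx0
  have hub₁ : IsUnit (f (Q₁ b₁)) := ((isUnit_iff_val_eq_one.mpr hb₁v).map Q₁).map f
  have hub₂ : IsUnit (Q₂ b₂) := (isUnit_iff_val_eq_one.mpr hb₂v).map Q₂
  have hcu : IsUnit ((c : ResRing v₂ n) ^ e * f (Q₁ b₁)) := (c ^ e).isUnit.mul hub₁
  obtain ⟨U, hU⟩ := hcu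
  have E : (c : ResRing v₂ n) ^ e * P ^ (k * e) * f (Q₁ b₁) = P ^ e * Q₂ b₂ := by
    rw [← key, hxc, mul_pow, ← pow_mul]
  have EW : P ^ (k * e) = ((U⁻¹ : (ResRing v₂ n)ˣ) : ResRing v₂ n) * Q₂ b₂ * P ^ e := by
    calc P ^ (k * e) = ((U⁻¹ : (ResRing v₂ n)ˣ) : ResRing v₂ n) * ((U : ResRing v₂ n) * P ^ (k * e)) := by
          rw [← mul_assoc, Units.inv_mul, one_mul]
      _ = ((U⁻¹ : (ResRing v₂ n)ˣ) : ResRing v₂ n) * (P ^ e * Q₂ b₂) := by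
          rw [hU]; rw [← E]; ring
      _ = ((U⁻¹ : (ResRing v₂ n)ˣ) : ResRing v₂ n) * Q₂ b₂ * P ^ e := by ring
  have hkelt : k * e < n := by
    by_contra hge
    have hPke : P ^ (k * e) = 0 := by
      rw [hP, ← map_pow, Ideal.Quotient.eq_zero_iff_mem, mem_mIdeal_pow_iff' hva₂]
      push_cast
      rw [map_pow, hva₂, expZ_pow, mul_one, expZ_le_expZ]
      omega
    apply hQ2ne
    have hPe : ((U : ResRing v₂ n)) * P ^ (k * e) = (U : ResRing v₂ n) * 0 := by rw [hPke]
    calc P ^ e * Q₂ b₂ = (c : ResRing v₂ n) ^ e * P ^ (k * e) * f (Q₁ b₁) := E.symm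
      _ = 0 := by rw [hPke]; ring
  -- lift the unit to the subring
  have hWu : IsUnit (((U⁻¹ : (ResRing v₂ n)ˣ) : ResRing v₂ n) * Q₂ b₂) :=
    (U⁻¹).isUnit.mul hub₂
  obtain ⟨w, hw⟩ := Ideal.Quotient.mk_surjective
    (I := (mIdeal v₂) ^ n) (((U⁻¹ : (ResRing v₂ n)ˣ) : ResRing v₂ n) * Q₂ b₂)
  have hwv : v₂ (w : K₂) = 1 := by
    refine val_eq_one_of_isUnit_mk hn0 hva₂ ?_
    rw [show Ideal.Quotient.mk ((mIdeal v₂) ^ n) w = Q₂ w from rfl, hw]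
    exact hWu
  have hdiff : Q₂ (a₂ ^ (k * e) - w * a₂ ^ e) = 0 := by
    rw [map_sub, map_mul, map_pow, map_pow,
      show Q₂ w = ((U⁻¹ : (ResRing v₂ n)ˣ) : ResRing v₂ n) * Q₂ b₂ from hw, ← hP, EW, sub_self]
  rw [hQ₂, Ideal.Quotient.eq_zero_iff_mem, mem_mIdeal_pow_iff' hva₂] at hdiff
  have hke : k * e = e := by
    by_contra hne
    have hc1 : v₂ (((a₂ : K₂)) ^ (k * e)) = expZ ((k * e : ℕ) : ℤ) := by
      rw [map_pow, hva₂, expZ_pow, mul_one]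
    have hc2 : v₂ ((w : K₂) * ((a₂ : K₂)) ^ e) = expZ ((e : ℕ) : ℤ) := by
      rw [map_mul, map_pow, hwv, hva₂, one_mul, expZ_pow, mul_one]
    have hsub : v₂ (((a₂ : K₂)) ^ (k * e) - (w : K₂) * ((a₂ : K₂)) ^ e)
        = expZ (min ((k * e : ℕ) : ℤ) ((e : ℕ) : ℤ)) := by
      rw [sub_eq_add_neg]
      rw [Valuation.map_add_of_distinct_val]
      · rw [Valuation.map_neg, hc1, hc2, max_expZ]
      · rw [Valuation.map_neg, hc1, hc2]
        intro hcon
        rw [expZ_inj] at hcon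
        exact hne (by exact_mod_cast hcon)
    have hmem : v₂ (((a₂ : K₂)) ^ (k * e) - (w : K₂) * ((a₂ : K₂)) ^ e) ≤ expZ n := by
      have := hdiff
      push_cast at this
      exact this
    rw [hsub, expZ_le_expZ] at hmem
    have hle : (n : ℤ) ≤ (e : ℕ) := le_trans hmem (min_le_right _ _)
    omega
  have hk1 : k = 1 := Nat.eq_of_mul_eq_mul_right he (by rw [one_mul]; exact hke)
  refine ⟨c, ?_⟩
  show x = (c : ResRing v₂ n) * Q₂ a₂
  rw [hxc, hk1, pow_one]

end Statement15
end
end
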